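/- Let p and q be distinct odd primes, r, s ≥ 1 integers, and N = p^r q^s. Let D ∈ ℤ/Nℤ be such that its reduction modulo p is a non-square in ℤ/pℤ and its reduction modulo q is a non-square in ℤ/qℤ. Then for every (x,y) ∈ H_{D,ℤ/Nℤ}, the p^{r−1}(p+1)·q^{s−1}(q+1)-th ⊗-power of (x,y) equals (1,0). -/

import Mathlib

/-- The Brahmagupta (Pell) product on `R × R`. -/
def pellMul {R : Type*} [CommRing R] (D : R) (P Q : R × R) : R × R :=
  (P.1 * Q.1 + D * P.2 * Q.2, P.2 * Q.1 + P.1 * Q.2)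

/-- `n`-th power with respect to the Brahmagupta product (identity `(1,0)`). -/
def pellPow {R : Type*} [CommRing R] (D : R) (P : R × R) : ℕ → R × R
  | 0 => (1, 0)
  | n + 1 => pellMul D P (pellPow D P n)

/-- The Pell conic `H_{D,R} = {(x, y) : x² − D y² = 1}`. -/
def pellConic {R : Type*} [CommRing R] (D : R) : Set (R × R) :=
  {P | P.1 ^ 2 - D * P.2 ^ 2 = 1}

/-- The ring `R[√D]`, implemented as pairs. -/
@[ext] structure PA (R : Type*) [CommRing R] (D : R) where
  x : R
  y : R

namespace PA
variable {R : Type*} [CommRing R] {D : R}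

instance : Add (PA R D) := ⟨fun a b => ⟨a.x + b.x, a.y + b.y⟩⟩
instance : Zero (PA R D) := ⟨⟨0, 0⟩⟩
instance : Neg (PA R D) := ⟨fun a => ⟨-a.x, -a.y⟩⟩
instance : Mul (PA R D) := ⟨fun a b => ⟨a.x * b.x + D * a.y * b.y, a.y * b.x + a.x * b.y⟩⟩
instance : One (PA R D) := ⟨⟨1, 0⟩⟩

@[simp] lemma add_x (a b : PA R D) : (a + b).x = a.x + b.x := rfl
@[simp] lemma add_y (a b : PA R D) : (a + b).y = a.y + b.y := rfl
@[simp] lemma neg_x (a : PA R D) : (-a).x = -a.x := rfl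
@[simp] lemma neg_y (a : PA R D) : (-a).y = -a.y := rfl
@[simp] lemma zero_x : (0 : PA R D).x = 0 := rfl
@[simp] lemma zero_y : (0 : PA R D).y = 0 := rfl
@[simp] lemma mul_x (a b : PA R D) : (a * b).x = a.x * b.x + D * a.y * b.y := rfl
@[simp] lemma mul_y (a b : PA R D) : (a * b).y = a.y * b.x + a.x * b.y := rfl
@[simp] lemma one_x : (1 : PA R D).x = 1 := rfl
@[simp] lemma one_y : (1 : PA R D).y = 0 := rfl

instance : CommRing (PA R D) where
  add := (· + ·)
  zero := 0
  neg := (- ·)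
  mul := (· * ·)
  one := 1
  nsmul := nsmulRec
  zsmul := zsmulRec
  add_assoc a b c := by ext <;> simp <;> ring
  zero_add a := by ext <;> simp
  add_zero a := by ext <;> simp
  add_comm a b := by ext <;> simp <;> ring
  neg_add_cancel a := by ext <;> simp
  mul_assoc a b c := by ext <;> simp <;> ring
  one_mul a := by ext <;> simp
  mul_one a := by ext <;> simp
  mul_comm a b := by ext <;> simp <;> ring
  left_distrib a b c := by ext <;> simp <;> ring
  right_distrib a b c := by ext <;> simp <;> ring
  zero_mul a := by ext <;> simp
  mul_zero a := by ext <;> simp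

/-- Conversion from pairs. -/
def ofPair (P : R × R) : PA R D := ⟨P.1, P.2⟩

lemma ofPair_pellMul (P Q : R × R) :
    (ofPair (pellMul D P Q) : PA R D) = ofPair P * ofPair Q := by
  ext <;> simp [ofPair, pellMul]

lemma ofPair_pellPow (P : R × R) (n : ℕ) :
    (ofPair (pellPow D P n) : PA R D) = (ofPair P) ^ n := by
  induction n with
  | zero => rfl
  | succ n ih => rw [pellPow, ofPair_pellMul, ih, pow_succ, mul_comm]

lemma ofPair_inj {P Q : R × R} (h : (ofPair P : PA R D) = ofPair Q) : P = Q := by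
  cases P; cases Q; simpa [ofPair, PA.ext_iff, Prod.ext_iff] using h

/-- `R → R[√D]`. -/
def eta : R →+* PA R D where
  toFun c := ⟨c, 0⟩
  map_one' := rfl
  map_mul' a b := by ext <;> simp
  map_zero' := rfl
  map_add' a b := by ext <;> simp

@[simp] lemma eta_x (c : R) : (eta c : PA R D).x = c := rfl
@[simp] lemma eta_y (c : R) : (eta c : PA R D).y = 0 := rfl

/-- The square root of `D`. -/
def sqrtD : PA R D := ⟨0, 1⟩

lemma sqrtD_sq : (sqrtD : PA R D) * sqrtD = eta D := by ext <;> simp [sqrtD]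

lemma decomp (P : R × R) : (ofPair P : PA R D) = eta P.1 + eta P.2 * sqrtD := by
  ext <;> simp [ofPair, sqrtD]

lemma natCast_eq (n : ℕ) : (n : PA R D) = eta (n : R) := by
  rw [map_natCast]

end PA

section NumberTheory

lemma zmod_dvd_val_of_cast_eq_zero {n m : ℕ} [NeZero n] (h : m ∣ n) (u : ZMod n)
    (hu : ZMod.castHom h (ZMod m) u = 0) : m ∣ u.val := by
  haveI : NeZero m := ⟨fun hm => NeZero.ne n (eq_zero_of_zero_dvd (hm ▸ h))⟩
  rwa [ZMod.castHom_apply, ← ZMod.natCast_val, ZMod.natCast_eq_zero_iff] at hu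

lemma zmod_exists_of_cast_eq_zero {n m : ℕ} [NeZero n] (h : m ∣ n) (u : ZMod n)
    (hu : ZMod.castHom h (ZMod m) u = 0) : ∃ v, u = (m : ZMod n) * v := by
  obtain ⟨t, ht⟩ := zmod_dvd_val_of_cast_eq_zero h u hu
  refine ⟨(t : ZMod n), ?_⟩
  rw [← ZMod.natCast_zmod_val u, ht]
  push_cast
  ring

lemma zmod_fermat_lift (p r : ℕ) [Fact p.Prime] (hr : r ≠ 0) (x : ZMod (p ^ r)) :
    ∃ u, x ^ p = x + (p : ZMod (p ^ r)) * u := by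
  haveI : NeZero (p ^ r) := ⟨pow_ne_zero r (Fact.out : p.Prime).ne_zero⟩
  have h : ZMod.castHom (dvd_pow_self p hr) (ZMod p) (x ^ p - x) = 0 := by
    rw [map_sub, map_pow, ZMod.pow_card, sub_self]
  obtain ⟨v, hv⟩ := zmod_exists_of_cast_eq_zero _ _ h
  exact ⟨v, by rw [← hv]; ring⟩

lemma zmod_euler_lift (p r : ℕ) [Fact p.Prime] (hp2 : p ≠ 2) (hr : r ≠ 0)
    (D : ZMod (p ^ r))
    (hD : ∀ c : ZMod p, c ^ 2 ≠ ZMod.castHom (dvd_pow_self p hr) (ZMod p) D) :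
    ∃ e, D ^ ((p - 1) / 2) = -1 + (p : ZMod (p ^ r)) * e := by
  haveI : NeZero (p ^ r) := ⟨pow_ne_zero r (Fact.out : p.Prime).ne_zero⟩
  set d := ZMod.castHom (dvd_pow_self p hr) (ZMod p) D with hd
  have hd0 : d ≠ 0 := by
    intro h0
    exact hD 0 (by rw [h0]; ring)
  have hdiv : p / 2 = (p - 1) / 2 := by
    have := (Fact.out : p.Prime).two_le
    have hodd : p % 2 = 1 := Nat.odd_iff.mp ((Fact.out : p.Prime).odd_of_ne_two hp2)
    omega
  have h1 : d ^ ((p - 1) / 2) = -1 := by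
    rcases ZMod.pow_div_two_eq_neg_one_or_one p hd0 with h | h
    · exfalso
      obtain ⟨c, hc⟩ := (ZMod.euler_criterion p hd0).mpr h
      exact hD c (by rw [hc]; ring)
    · rwa [hdiv] at h
  have h : ZMod.castHom (dvd_pow_self p hr) (ZMod p) (D ^ ((p - 1) / 2) + 1) = 0 := by
    rw [map_add, map_pow, map_one, ← hd, h1, neg_add_cancel]
  obtain ⟨v, hv⟩ := zmod_exists_of_cast_eq_zero _ _ h
  exact ⟨v, by rw [← hv]; ring⟩

lemma one_add_pow {A : Type*} [CommRing A] (c : A) (n : ℕ) :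
    ∃ e, (1 + c) ^ n = 1 + n * c + c ^ 2 * e := by
  induction n with
  | zero => exact ⟨0, by simp⟩
  | succ n ih =>
    obtain ⟨e, he⟩ := ih
    refine ⟨n + e + c * e, ?_⟩
    rw [pow_succ, he]
    push_cast
    ring

lemma one_add_p_pow {A : Type*} [CommRing A] (p : ℕ) (w : A) (k : ℕ) :
    ∃ v, (1 + (p : A) * w) ^ (p ^ k) = 1 + (p : A) ^ (k + 1) * v := by
  induction k with
  | zero => exact ⟨w, by simp⟩
  | succ k ih =>
    obtain ⟨v, hv⟩ := ih
    obtain ⟨e, he⟩ := one_add_pow ((p : A) ^ (k + 1) * v) p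
    refine ⟨v + (p : A) ^ k * v ^ 2 * e, ?_⟩
    rw [pow_succ, pow_mul, hv, he]
    ring

end NumberTheory

section Core

open PA

lemma pellPow_mul {R : Type*} [CommRing R] (D : R) (P : R × R) (a b : ℕ) :
    pellPow D P (a * b) = pellPow D (pellPow D P a) b := by
  apply PA.ofPair_inj (D := D)
  rw [ofPair_pellPow, ofPair_pellPow, ofPair_pellPow, pow_mul]

lemma pellPow_one_zero {R : Type*} [CommRing R] (D : R) (b : ℕ) :
    pellPow D ((1 : R), (0 : R)) b = (1, 0) := by
  apply PA.ofPair_inj (D := D)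
  rw [ofPair_pellPow]
  show (1 : PA R D) ^ b = 1
  rw [one_pow]

lemma map_pellMul {R S : Type*} [CommRing R] [CommRing S] (f : R →+* S) (D : R)
    (P Q : R × R) :
    Prod.map f f (pellMul D P Q) = pellMul (f D) (Prod.map f f P) (Prod.map f f Q) := by
  simp [pellMul, Prod.map]

lemma map_pellPow {R S : Type*} [CommRing R] [CommRing S] (f : R →+* S) (D : R)
    (P : R × R) (n : ℕ) :
    Prod.map f f (pellPow D P n) = pellPow (f D) (Prod.map f f P) n := by
  induction n with
  | zero => simp [pellPow, Prod.map]
  | succ n ih => rw [pellPow, pellPow, map_pellMul, ih]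

lemma pellConic_map {R S : Type*} [CommRing R] [CommRing S] (f : R →+* S) {D : R}
    {P : R × R} (h : P ∈ pellConic D) : Prod.map f f P ∈ pellConic (f D) := by
  simp only [pellConic, Set.mem_setOf_eq] at h ⊢
  rw [Prod.map_fst, Prod.map_snd, ← map_pow, ← map_pow, ← map_mul, ← map_sub, h, map_one]

/-- The core local computation over `ZMod (p^r)`. -/
lemma core_lemma (p r : ℕ) (hp : p.Prime) (hp2 : p ≠ 2) (hr : r ≠ 0)
    (D : ZMod (p ^ r))
    (hD : ∀ c : ZMod p, c ^ 2 ≠ ZMod.castHom (dvd_pow_self p hr) (ZMod p) D) :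
    ∀ P ∈ pellConic D, pellPow D P (p ^ (r - 1) * (p + 1)) = (1, 0) := by
  haveI : Fact p.Prime := ⟨hp⟩
  haveI : NeZero (p ^ r) := ⟨pow_ne_zero r hp.ne_zero⟩
  intro P hP
  have hP' : P.1 ^ 2 - D * P.2 ^ 2 = 1 := hP
  set z : PA (ZMod (p ^ r)) D := ofPair P with hzdef
  suffices h : z ^ (p ^ (r - 1) * (p + 1)) = 1 by
    apply PA.ofPair_inj (D := D)
    rw [ofPair_pellPow]
    exact h
  obtain ⟨u, hu⟩ := zmod_fermat_lift p r hr P.1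
  obtain ⟨v, hv⟩ := zmod_fermat_lift p r hr P.2
  obtain ⟨e, he⟩ := zmod_euler_lift p r hp2 hr D hD
  obtain ⟨m, hm⟩ := exists_add_pow_prime_eq hp (eta P.1 : PA (ZMod (p ^ r)) D)
    (eta P.2 * sqrtD)
  set k := (p - 1) / 2 with hk
  have hpk : p = 2 * k + 1 := by
    have := hp.two_le
    have hodd : p % 2 = 1 := Nat.odd_iff.mp (hp.odd_of_ne_two hp2)
    omega
  have hsp : (sqrtD : PA (ZMod (p ^ r)) D) ^ p = eta (D ^ k) * sqrtD := by
    rw [congrArg (fun t => (@PA.sqrtD (ZMod (p ^ r)) _ D) ^ t) hpk]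
    rw [pow_succ, pow_mul, pow_two, sqrtD_sq, ← map_pow]
  have hz : z = eta P.1 + eta P.2 * sqrtD := decomp P
  have hD' : (eta (D ^ k) : PA (ZMod (p ^ r)) D) = -1 + (p : PA (ZMod (p ^ r)) D) * eta e := by
    rw [he, map_add, map_mul, map_neg, map_one, map_natCast]
  have hx : (eta P.1 : PA (ZMod (p ^ r)) D) ^ p = eta P.1 + (p : PA (ZMod (p ^ r)) D) * eta u := by
    rw [← map_pow, hu, map_add, map_mul, map_natCast]
  have hy : (eta P.2 : PA (ZMod (p ^ r)) D) ^ p = eta P.2 + (p : PA (ZMod (p ^ r)) D) * eta v := by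
    rw [← map_pow, hv, map_add, map_mul, map_natCast]
  have hzp : ∃ W : PA (ZMod (p ^ r)) D,
      z ^ p = (eta P.1 - eta P.2 * sqrtD) + (p : PA (ZMod (p ^ r)) D) * W := by
    refine ⟨eta u + eta P.1 * (eta P.2 * sqrtD) * m + (eta P.2 * eta e + eta v * (-1 + (p : PA (ZMod (p ^ r)) D) * eta e)) * sqrtD, ?_⟩
    rw [hz, hm, mul_pow, hx, hy, hsp, hD']
    ring
  obtain ⟨W, hzp⟩ := hzp
  have hconj : z * (eta P.1 - eta P.2 * sqrtD) = 1 := by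
    have expand : z * (eta P.1 - eta P.2 * sqrtD) = eta (P.1 ^ 2 - D * P.2 ^ 2) := by
      rw [hz, map_sub, map_mul, map_pow, map_pow]
      linear_combination (-(eta P.2 * eta P.2) : PA (ZMod (p ^ r)) D) * (@PA.sqrtD_sq (ZMod (p ^ r)) _ D)
    rw [expand, hP', map_one]
  have h1 : z ^ (p + 1) = 1 + (p : PA (ZMod (p ^ r)) D) * (W * z) := by
    rw [pow_succ, hzp]
    linear_combination hconj
  obtain ⟨V, hV⟩ := one_add_p_pow p (W * z) (r - 1)
  have hr1 : r - 1 + 1 = r := by omega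
  have hpr : (p : PA (ZMod (p ^ r)) D) ^ r = 0 := by
    have h0 : ((p ^ r : ℕ) : ZMod (p ^ r)) = 0 := ZMod.natCast_self _
    calc (p : PA (ZMod (p ^ r)) D) ^ r = ((p ^ r : ℕ) : PA (ZMod (p ^ r)) D) := by push_cast; ring
      _ = eta (((p ^ r : ℕ) : ZMod (p ^ r))) := (map_natCast eta _).symm
      _ = 0 := by rw [h0, map_zero]
  calc z ^ (p ^ (r - 1) * (p + 1)) = (z ^ (p + 1)) ^ (p ^ (r - 1)) := by
        rw [← pow_mul, mul_comm]
    _ = (1 + (p : PA (ZMod (p ^ r)) D) * (W * z)) ^ (p ^ (r - 1)) := by rw [h1]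
    _ = 1 + (p : PA (ZMod (p ^ r)) D) ^ (r - 1 + 1) * V := hV
    _ = 1 := by rw [hr1, hpr, zero_mul, add_zero]

end Core

lemma crt_eq {m n : ℕ} [NeZero (m * n)] (h : Nat.Coprime m n) {a b : ZMod (m * n)}
    (h1 : ZMod.castHom (dvd_mul_right m n) (ZMod m) a
        = ZMod.castHom (dvd_mul_right m n) (ZMod m) b)
    (h2 : ZMod.castHom (dvd_mul_left n m) (ZMod n) a
        = ZMod.castHom (dvd_mul_left n m) (ZMod n) b) : a = b := by
  have d1 : m ∣ (a - b).val := by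
    apply zmod_dvd_val_of_cast_eq_zero (dvd_mul_right m n)
    rw [map_sub, h1, sub_self]
  have d2 : n ∣ (a - b).val := by
    apply zmod_dvd_val_of_cast_eq_zero (dvd_mul_left n m)
    rw [map_sub, h2, sub_self]
  have hmn : m * n ∣ (a - b).val := h.mul_dvd_of_dvd_of_dvd d1 d2
  have : a - b = 0 := by
    rw [← ZMod.natCast_zmod_val (a - b), ZMod.natCast_eq_zero_iff]
    exact hmn
  exact sub_eq_zero.mp this

/-- Let `p, q` be distinct odd primes, `r, s ≥ 1`, `N = p^r q^s`, and
`D ∈ ℤ/Nℤ` reducing to a non-square modulo both `p` and `q`. Then every point of the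
Pell conic over `ℤ/Nℤ` satisfies `(x,y)^{⊗ p^{r−1}(p+1) q^{s−1}(q+1)} = (1, 0)`. -/
theorem pellPow_order_two_prime_powers (p q : ℕ) (hp : p.Prime) (hq : q.Prime)
    (hpq : p ≠ q) (hp2 : p ≠ 2) (hq2 : q ≠ 2) (r s : ℕ) (hr : 1 ≤ r) (hs : 1 ≤ s)
    (D : ZMod (p ^ r * q ^ s))
    (hDp : ∀ c : ZMod p, c ^ 2 ≠
      ZMod.castHom ((dvd_pow_self p (Nat.one_le_iff_ne_zero.mp hr)).mul_right (q ^ s))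
        (ZMod p) D)
    (hDq : ∀ c : ZMod q, c ^ 2 ≠
      ZMod.castHom ((dvd_pow_self q (Nat.one_le_iff_ne_zero.mp hs)).mul_left (p ^ r))
        (ZMod q) D) :
    ∀ P ∈ pellConic D,
      pellPow D P (p ^ (r - 1) * (p + 1) * (q ^ (s - 1) * (q + 1))) = (1, 0) := by
  intro P hP
  haveI : NeZero (p ^ r * q ^ s) :=
    ⟨mul_ne_zero (pow_ne_zero r hp.ne_zero) (pow_ne_zero s hq.ne_zero)⟩
  set f := ZMod.castHom (dvd_mul_right (p ^ r) (q ^ s)) (ZMod (p ^ r)) with hf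
  set g := ZMod.castHom (dvd_mul_left (q ^ s) (p ^ r)) (ZMod (q ^ s)) with hg
  have hr0 : r ≠ 0 := Nat.one_le_iff_ne_zero.mp hr
  have hs0 : s ≠ 0 := Nat.one_le_iff_ne_zero.mp hs
  -- hypotheses for the local lemmas
  have hDp' : ∀ c : ZMod p, c ^ 2 ≠ ZMod.castHom (dvd_pow_self p hr0) (ZMod p) (f D) := by
    intro c hc
    apply hDp c
    rw [hc, hf, ← RingHom.comp_apply, ZMod.castHom_comp]
  have hDq' : ∀ c : ZMod q, c ^ 2 ≠ ZMod.castHom (dvd_pow_self q hs0) (ZMod q) (g D) := by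
    intro c hc
    apply hDq c
    rw [hc, hg, ← RingHom.comp_apply, ZMod.castHom_comp]
  have hcop : Nat.Coprime (p ^ r) (q ^ s) :=
    Nat.Coprime.pow r s ((Nat.coprime_primes hp hq).mpr hpq)
  -- local conclusions
  have hfP := core_lemma p r hp hp2 hr0 (f D) hDp' (Prod.map f f P) (pellConic_map f hP)
  have hgP := core_lemma q s hq hq2 hs0 (g D) hDq' (Prod.map g g P) (pellConic_map g hP)
  set M := p ^ (r - 1) * (p + 1) * (q ^ (s - 1) * (q + 1)) with hM
  have hfM : Prod.map f f (pellPow D P M) = ((1 : ZMod (p ^ r)), (0 : ZMod (p ^ r))) := by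
    rw [map_pellPow, hM, pellPow_mul, hfP, pellPow_one_zero]
  have hgM : Prod.map g g (pellPow D P M) = ((1 : ZMod (q ^ s)), (0 : ZMod (q ^ s))) := by
    have : M = q ^ (s - 1) * (q + 1) * (p ^ (r - 1) * (p + 1)) := by rw [hM]; ring
    rw [map_pellPow, this, pellPow_mul, hgP, pellPow_one_zero]
  have e1 : (pellPow D P M).1 = 1 := by
    apply crt_eq hcop (m := p ^ r) (n := q ^ s)
    · rw [map_one]
      have := congrArg Prod.fst hfM
      rwa [Prod.map_fst] at this
    · rw [map_one]
      have := congrArg Prod.fst hgM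
      rwa [Prod.map_fst] at this
  have e2 : (pellPow D P M).2 = 0 := by
    apply crt_eq hcop (m := p ^ r) (n := q ^ s)
    · rw [map_zero]
      have := congrArg Prod.snd hfM
      rwa [Prod.map_snd] at this
    · rw [map_zero]
      have := congrArg Prod.snd hgM
      rwa [Prod.map_snd] at this
  exact Prod.ext e1 e2
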